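/- arXiv:2207.05945 — 4 statements merged into one kernel-verified Lean document; each statement's English description precedes it below -/
import Mathlib

section
/- Let $p \in [1,2]$ and let $A \in \mathbb{R}^{n \times d}$ have full column rank. If all leverage scores of $A$ are at most $C > 0$, i.e., $a_i^\top (A^\top A)^{-1} a_i \le C$ for all $i$, then for every $j \ge 1$, the $j$-th iterate of the Lewis weight iteration started at $W^{(0)} = I_n$ satisfies $W^{(j)} \preceq C^{1-(1-p/2)^j} I_n$. -/
open Matrix

private lemma aux_dot_sym {d : ℕ} {M : Matrix (Fin d) (Fin d) ℝ} (hM : Mᵀ = M)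
    (u v : Fin d → ℝ) : u ⬝ᵥ M *ᵥ v = v ⬝ᵥ M *ᵥ u := by
  rw [Matrix.dotProduct_mulVec]
  nth_rewrite 1 [← hM]
  rw [Matrix.vecMul_transpose, dotProduct_comm]

private lemma aux_key_inv_le {d : ℕ} {B1 B2 : Matrix (Fin d) (Fin d) ℝ}
    (h1 : B1.PosDef) (h2 : B2.PosDef)
    (h : ∀ y, y ⬝ᵥ B1 *ᵥ y ≤ y ⬝ᵥ B2 *ᵥ y) (x : Fin d → ℝ) :
    x ⬝ᵥ B2⁻¹ *ᵥ x ≤ x ⬝ᵥ B1⁻¹ *ᵥ x := by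
  have hs1 : B1ᵀ = B1 := by
    have := h1.isHermitian
    rwa [Matrix.IsHermitian, Matrix.conjTranspose_eq_transpose_of_trivial] at this
  set u := B2⁻¹ *ᵥ x with hu_def
  set v := B1⁻¹ *ᵥ x with hv_def
  have hu : B2 *ᵥ u = x := by
    rw [hu_def, Matrix.mulVec_mulVec, Matrix.mul_nonsing_inv _ h2.det_pos.ne'.isUnit,
      Matrix.one_mulVec]
  have hv : B1 *ᵥ v = x := by
    rw [hv_def, Matrix.mulVec_mulVec, Matrix.mul_nonsing_inv _ h1.det_pos.ne'.isUnit,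
      Matrix.one_mulVec]
  have h1' : u ⬝ᵥ B1 *ᵥ u ≤ u ⬝ᵥ x := by
    have := h u; rwa [hu] at this
  have h2' : u ⬝ᵥ B1 *ᵥ v = u ⬝ᵥ x := by rw [hv]
  have h3' : v ⬝ᵥ B1 *ᵥ v = v ⬝ᵥ x := by rw [hv]
  have h4' : v ⬝ᵥ B1 *ᵥ u = u ⬝ᵥ x := by rw [aux_dot_sym hs1, hv]
  have hpsd : 0 ≤ (v - u) ⬝ᵥ B1 *ᵥ (v - u) := by
    have := h1.posSemidef.dotProduct_mulVec_nonneg (v - u)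
    simpa using this
  rw [Matrix.mulVec_sub, dotProduct_sub, sub_dotProduct, sub_dotProduct] at hpsd
  rw [dotProduct_comm x u, dotProduct_comm x v]
  linarith

private lemma aux_quad_ADA {n d : ℕ} (A : Matrix (Fin n) (Fin d) ℝ) (w : Fin n → ℝ)
    (y : Fin d → ℝ) :
    y ⬝ᵥ (Aᵀ * Matrix.diagonal w * A) *ᵥ y = ∑ t, w t * ((A *ᵥ y) t) ^ 2 := by
  rw [← Matrix.mulVec_mulVec, ← Matrix.mulVec_mulVec, Matrix.dotProduct_mulVec,
    Matrix.vecMul_transpose, dotProduct]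
  refine Finset.sum_congr rfl fun t _ => ?_
  rw [Matrix.mulVec_diagonal]
  ring

private lemma aux_quad_AA {n d : ℕ} (A : Matrix (Fin n) (Fin d) ℝ) (y : Fin d → ℝ) :
    y ⬝ᵥ (Aᵀ * A) *ᵥ y = ∑ t, ((A *ᵥ y) t) ^ 2 := by
  have h := aux_quad_ADA A (fun _ => 1) y
  simp only [Matrix.diagonal_one, Matrix.mul_one, one_mul] at h
  exact h

private lemma aux_posdef_ADA {n d : ℕ} (A : Matrix (Fin n) (Fin d) ℝ)
    (hker : ∀ x : Fin d → ℝ, x ≠ 0 → A *ᵥ x ≠ 0)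
    (w : Fin n → ℝ) (hw0 : ∀ t, 0 ≤ w t) (hwpos : ∀ t, A t ≠ 0 → 0 < w t) :
    (Aᵀ * Matrix.diagonal w * A).PosDef := by
  refine Matrix.PosDef.of_dotProduct_mulVec_pos ?_ ?_
  · rw [Matrix.IsHermitian, Matrix.conjTranspose_eq_transpose_of_trivial,
      Matrix.transpose_mul, Matrix.transpose_mul, Matrix.transpose_transpose,
      Matrix.diagonal_transpose, Matrix.mul_assoc]
  · intro x hx
    have hx' : star x = x := by simp
    rw [hx', aux_quad_ADA]
    obtain ⟨t0, ht0⟩ := Function.ne_iff.mp (hker x hx)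
    have hrow : A t0 ≠ 0 := by
      intro h0
      apply ht0
      show A t0 ⬝ᵥ x = 0
      rw [h0]
      exact zero_dotProduct x
    refine Finset.sum_pos' (fun t _ => mul_nonneg (hw0 t) (sq_nonneg _))
      ⟨t0, Finset.mem_univ _, mul_pos (hwpos t0 hrow) (sq_pos_of_ne_zero ht0)⟩

private lemma aux_posdef_smul {d : ℕ} {M : Matrix (Fin d) (Fin d) ℝ} (hM : M.PosDef) {c : ℝ}
    (hc : 0 < c) : (c • M).PosDef := by
  refine Matrix.PosDef.of_dotProduct_mulVec_pos ?_ ?_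
  · show (c • M)ᴴ = c • M
    rw [Matrix.conjTranspose_smul, hM.isHermitian.eq, star_trivial]
  · intro x hx
    rw [Matrix.smul_mulVec, dotProduct_smul, smul_eq_mul]
    exact mul_pos hc (hM.dotProduct_mulVec_pos hx)

private lemma aux_inv_smul {d : ℕ} {M : Matrix (Fin d) (Fin d) ℝ} (hM : M.PosDef) {c : ℝ}
    (hc : 0 < c) : (c • M)⁻¹ = c⁻¹ • M⁻¹ := by
  apply Matrix.inv_eq_right_inv
  rw [Matrix.smul_mul, Matrix.mul_smul, smul_smul, mul_inv_cancel₀ hc.ne',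
    Matrix.mul_nonsing_inv _ hM.det_pos.ne'.isUnit, one_smul]

private lemma aux_mulVec_ne {n d : ℕ} (A : Matrix (Fin n) (Fin d) ℝ) (hA : A.rank = d) :
    ∀ x : Fin d → ℝ, x ≠ 0 → A *ᵥ x ≠ 0 := by
  have hrn := LinearMap.finrank_range_add_finrank_ker A.mulVecLin
  rw [Module.finrank_pi] at hrn
  have hr : Module.finrank ℝ (LinearMap.range A.mulVecLin) = d := hA
  have hker : Module.finrank ℝ (LinearMap.ker A.mulVecLin) = 0 := by
    simp at hrn
    omega
  have hbot : LinearMap.ker A.mulVecLin = ⊥ := Submodule.finrank_eq_zero.mp hker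
  intro x hx hax
  apply hx
  have : x ∈ LinearMap.ker A.mulVecLin := by
    rw [LinearMap.mem_ker, Matrix.mulVecLin_apply]
    exact hax
  rwa [hbot, Submodule.mem_bot] at this

/-- If all leverage scores of `A` are at most `C`, then the `j`-th Lewis weight iterate
(started at the identity) satisfies `W⁽ʲ⁾ ⪯ C^{1-(1-p/2)^j} Iₙ` (entrywise on the diagonal). -/
theorem stmt_3 {n d : ℕ} (p : ℝ) (hp1 : 1 ≤ p) (hp2 : p ≤ 2)
    (A : Matrix (Fin n) (Fin d) ℝ) (hA : A.rank = d)
    (C : ℝ) (hC : 0 < C)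
    (hlev : ∀ i, A i ⬝ᵥ ((Aᵀ * A)⁻¹).mulVec (A i) ≤ C)
    (W : ℕ → Fin n → ℝ)
    (hW0 : ∀ i, W 0 i = 1)
    (hWiter : ∀ j i, W (j + 1) i =
      (A i ⬝ᵥ ((Aᵀ * Matrix.diagonal (fun t => W j t ^ (1 - 2 / p)) * A)⁻¹).mulVec (A i))
        ^ (p / 2)) :
    ∀ j : ℕ, 1 ≤ j → ∀ i, W j i ≤ C ^ (1 - (1 - p / 2) ^ j) := by
  have hp0 : (0:ℝ) < p := by linarith
  have hexp_np : 1 - 2 / p ≤ 0 := by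
    have : (1:ℝ) ≤ 2 / p := (one_le_div hp0).mpr hp2
    linarith
  have hker := aux_mulVec_ne A hA
  have hAA : (Aᵀ * A).PosDef := by
    have h := aux_posdef_ADA A hker (fun _ => 1) (fun _ => zero_le_one) (fun _ _ => one_pos)
    simpa [Matrix.diagonal_one] using h
  have key : ∀ j, ∀ i,
      (0 ≤ W j i ∧ (A i ≠ 0 → 0 < W j i)) ∧ W j i ≤ C ^ (1 - (1 - p / 2) ^ j) := by
    intro j
    induction j with
    | zero =>
      intro i
      rw [hW0]
      refine ⟨⟨zero_le_one, fun _ => one_pos⟩, ?_⟩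
      simp
    | succ j ih =>
      intro i
      set a : ℝ := 1 - (1 - p / 2) ^ j with ha_def
      set M : ℝ := C ^ a with hM_def
      have hM : 0 < M := Real.rpow_pos_of_pos hC _
      set w : Fin n → ℝ := fun t => W j t ^ (1 - 2 / p) with hw_def
      have hw0 : ∀ t, 0 ≤ w t := fun t => Real.rpow_nonneg ((ih t).1.1) _
      have hwpos : ∀ t, A t ≠ 0 → 0 < w t := fun t ht =>
        Real.rpow_pos_of_pos ((ih t).1.2 ht) _
      set c : ℝ := M ^ (1 - 2 / p) with hc_def
      have hc : 0 < c := Real.rpow_pos_of_pos hM _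
      have hcw : ∀ t, A t ≠ 0 → c ≤ w t := fun t ht =>
        Real.rpow_le_rpow_of_nonpos ((ih t).1.2 ht) ((ih t).2) hexp_np
      have hB2 : (Aᵀ * Matrix.diagonal w * A).PosDef := aux_posdef_ADA A hker w hw0 hwpos
      have hB1 : (c • (Aᵀ * A)).PosDef := aux_posdef_smul hAA hc
      have hcomp : ∀ y, y ⬝ᵥ (c • (Aᵀ * A)) *ᵥ y ≤ y ⬝ᵥ (Aᵀ * Matrix.diagonal w * A) *ᵥ y := by
        intro y
        rw [Matrix.smul_mulVec, dotProduct_smul, smul_eq_mul, aux_quad_AA, aux_quad_ADA,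
          Finset.mul_sum]
        refine Finset.sum_le_sum fun t _ => ?_
        by_cases hAt : A t = 0
        · have hz : (A *ᵥ y) t = 0 := by
            show A t ⬝ᵥ y = 0
            rw [hAt]
            exact zero_dotProduct y
          rw [hz]
          simp
        · exact mul_le_mul_of_nonneg_right (hcw t hAt) (sq_nonneg _)
      have hq := aux_key_inv_le hB1 hB2 hcomp (A i)
      rw [aux_inv_smul hAA hc, Matrix.smul_mulVec, dotProduct_smul, smul_eq_mul] at hq
      have hqC : A i ⬝ᵥ (Aᵀ * Matrix.diagonal w * A)⁻¹ *ᵥ A i ≤ c⁻¹ * C :=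
        hq.trans (mul_le_mul_of_nonneg_left (hlev i) (inv_nonneg.mpr hc.le))
      have hq0 : 0 ≤ A i ⬝ᵥ (Aᵀ * Matrix.diagonal w * A)⁻¹ *ᵥ A i := by
        have := hB2.inv.posSemidef.dotProduct_mulVec_nonneg (A i)
        simpa using this
      have hWj1 : W (j + 1) i = (A i ⬝ᵥ (Aᵀ * Matrix.diagonal w * A)⁻¹ *ᵥ A i) ^ (p / 2) := by
        rw [hWiter j i, ← hw_def]
      constructor
      · constructor
        · rw [hWj1]
          exact Real.rpow_nonneg hq0 _
        · intro hi
          rw [hWj1]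
          refine Real.rpow_pos_of_pos ?_ _
          have := hB2.inv.dotProduct_mulVec_pos hi
          simpa using this
      · have hstep : W (j + 1) i ≤ (c⁻¹ * C) ^ (p / 2) := by
          rw [hWj1]
          exact Real.rpow_le_rpow hq0 hqC (by positivity)
        refine hstep.trans_eq ?_
        have e1 : c = C ^ (a * (1 - 2 / p)) := by
          rw [hc_def, hM_def, ← Real.rpow_mul hC.le]
        have e2 : c⁻¹ * C = C ^ (-(a * (1 - 2 / p)) + 1) := by
          rw [Real.rpow_add hC, Real.rpow_one, e1, Real.rpow_neg hC.le]
        rw [e2, ← Real.rpow_mul hC.le]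
        congr 1
        rw [ha_def, pow_succ]
        field_simp
        ring
  intro j _ i
  exact (key j i).2
end

section
/- Let $p \in [1,2]$ and $A \in \mathbb{R}^{n \times d}$ with full column rank. If the leverage scores of $A$ are all at most $C > 0$, then the $\ell_p$ Lewis weights of $A$ are all at most $C$. -/
open Matrix Filter

-- variational inequality: for N posdef, 2 x·y - yᵀNy ≤ xᵀN⁻¹x
lemma quad_aux {d : ℕ} {N : Matrix (Fin d) (Fin d) ℝ} (hN : N.PosDef)
    (x y : Fin d → ℝ) :
    2 * (x ⬝ᵥ y) - y ⬝ᵥ N *ᵥ y ≤ x ⬝ᵥ N⁻¹ *ᵥ x := by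
  have hU := hN.isUnit
  have hNi : N * N⁻¹ = 1 := mul_nonsing_inv N (isUnit_iff_isUnit_det N |>.mp hU)
  set z : Fin d → ℝ := y - N⁻¹ *ᵥ x with hz
  have h0 : 0 ≤ z ⬝ᵥ N *ᵥ z := by
    have := hN.posSemidef.dotProduct_mulVec_nonneg z
    simpa using this
  have hNx : N *ᵥ (N⁻¹ *ᵥ x) = x := by
    rw [mulVec_mulVec, hNi, one_mulVec]
  have hsym : Nᵀ = N := by
    have := hN.isHermitian
    simpa [Matrix.IsHermitian, Matrix.conjTranspose_eq_transpose_of_trivial] using this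
  have h1 : (N⁻¹ *ᵥ x) ⬝ᵥ N *ᵥ y = x ⬝ᵥ y := by
    rw [Matrix.dotProduct_mulVec, ← Matrix.mulVec_transpose, hsym, hNx]
  have h2 : (N⁻¹ *ᵥ x) ⬝ᵥ N *ᵥ (N⁻¹ *ᵥ x) = x ⬝ᵥ N⁻¹ *ᵥ x := by
    rw [hNx, dotProduct_comm]
  have h3 : y ⬝ᵥ N *ᵥ (N⁻¹ *ᵥ x) = x ⬝ᵥ y := by
    rw [hNx, dotProduct_comm]
  have hexp : z ⬝ᵥ N *ᵥ z
      = y ⬝ᵥ N *ᵥ y - (x ⬝ᵥ y) - (x ⬝ᵥ y) + x ⬝ᵥ N⁻¹ *ᵥ x := by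
    rw [hz, Matrix.mulVec_sub, sub_dotProduct, dotProduct_sub,
      dotProduct_sub, h1, h2, h3]
    ring
  linarith [h0, hexp.symm.le]

lemma inv_quad_le {d : ℕ} {M N : Matrix (Fin d) (Fin d) ℝ} (hM : M.PosDef) (hN : N.PosDef)
    (hMN : ∀ y, y ⬝ᵥ N *ᵥ y ≤ y ⬝ᵥ M *ᵥ y) (x : Fin d → ℝ) :
    x ⬝ᵥ M⁻¹ *ᵥ x ≤ x ⬝ᵥ N⁻¹ *ᵥ x := by
  have hU := hM.isUnit
  have hMi : M * M⁻¹ = 1 := mul_nonsing_inv M (isUnit_iff_isUnit_det M |>.mp hU)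
  set y : Fin d → ℝ := M⁻¹ *ᵥ x with hy
  have hMy : M *ᵥ y = x := by rw [hy, mulVec_mulVec, hMi, one_mulVec]
  have h1 : y ⬝ᵥ M *ᵥ y = x ⬝ᵥ y := by rw [hMy, dotProduct_comm]
  have h2 : x ⬝ᵥ M⁻¹ *ᵥ x = 2 * (x ⬝ᵥ y) - y ⬝ᵥ M *ᵥ y := by
    rw [h1, ← hy]; ring
  calc x ⬝ᵥ M⁻¹ *ᵥ x = 2 * (x ⬝ᵥ y) - y ⬝ᵥ M *ᵥ y := h2
    _ ≤ 2 * (x ⬝ᵥ y) - y ⬝ᵥ N *ᵥ y := by linarith [hMN y]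
    _ ≤ x ⬝ᵥ N⁻¹ *ᵥ x := quad_aux hN x y

lemma mulVec_inj {n d : ℕ} {A : Matrix (Fin n) (Fin d) ℝ} (hA : A.rank = d) :
    ∀ x : Fin d → ℝ, x ≠ 0 → A *ᵥ x ≠ 0 := by
  intro x hx hAx
  have hker : LinearMap.ker A.mulVecLin = ⊥ := by
    have h1 := LinearMap.finrank_range_add_finrank_ker A.mulVecLin
    rw [show Module.finrank ℝ (LinearMap.range A.mulVecLin) = d from hA] at h1
    simp [Module.finrank_pi] at h1
    exact h1
  have hx0 : x ∈ LinearMap.ker A.mulVecLin := LinearMap.mem_ker.mpr (by simpa using hAx)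
  rw [hker] at hx0
  exact hx (by simpa using hx0)

lemma quadform_ADA {n d : ℕ} (A : Matrix (Fin n) (Fin d) ℝ) (dv : Fin n → ℝ)
    (y : Fin d → ℝ) :
    y ⬝ᵥ (Aᵀ * Matrix.diagonal dv * A) *ᵥ y = ∑ t, dv t * (A *ᵥ y) t ^ 2 := by
  rw [← mulVec_mulVec, ← mulVec_mulVec, Matrix.dotProduct_mulVec, ← Matrix.mulVec_transpose,
    Matrix.transpose_transpose]
  simp [dotProduct, Matrix.mulVec_diagonal]
  congr 1; ext t; ring

lemma posdef_ADA {n d : ℕ} {A : Matrix (Fin n) (Fin d) ℝ} (hA : A.rank = d)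
    {dv : Fin n → ℝ} (hdv : ∀ t, 0 < dv t) :
    (Aᵀ * Matrix.diagonal dv * A).PosDef := by
  refine Matrix.PosDef.of_dotProduct_mulVec_pos ?_ ?_
  · have : Aᴴ = Aᵀ := rfl
    have h := Matrix.isHermitian_conjTranspose_mul_mul (A := Matrix.diagonal dv) A
      (Matrix.isHermitian_diagonal_of_self_adjoint _ (funext fun i => rfl))
    simpa [this] using h
  · intro x hx
    have hAx := mulVec_inj hA x hx
    have : (x : Fin d → ℝ) ⬝ᵥ (Aᵀ * Matrix.diagonal dv * A) *ᵥ x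
        = ∑ t, dv t * (A *ᵥ x) t ^ 2 := quadform_ADA A dv x
    have hpos : 0 < ∑ t, dv t * (A *ᵥ x) t ^ 2 := by
      obtain ⟨t0, ht0⟩ : ∃ t, (A *ᵥ x) t ≠ 0 := by
        by_contra h; push_neg at h; exact hAx (funext h)
      apply Finset.sum_pos' (fun t _ => mul_nonneg (hdv t).le (sq_nonneg _))
      exact ⟨t0, Finset.mem_univ _, mul_pos (hdv t0) (by positivity)⟩
    simpa [this] using hpos

/-- If the leverage scores of `A` are all at most `C`, then the `ℓ_p` Lewis weights of `A`
(obtained as the limit of the Lewis weight iteration started at the identity) are all at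
most `C`. -/
theorem stmt_4 {n d : ℕ} (p : ℝ) (hp1 : 1 ≤ p) (hp2 : p ≤ 2)
    (A : Matrix (Fin n) (Fin d) ℝ) (hA : A.rank = d)
    (C : ℝ) (hC : 0 < C)
    (hlev : ∀ i, A i ⬝ᵥ ((Aᵀ * A)⁻¹).mulVec (A i) ≤ C)
    (W : ℕ → Fin n → ℝ)
    (hW0 : ∀ i, W 0 i = 1)
    (hWiter : ∀ j i, W (j + 1) i =
      (A i ⬝ᵥ ((Aᵀ * Matrix.diagonal (fun t => W j t ^ (1 - 2 / p)) * A)⁻¹).mulVec (A i))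
        ^ (p / 2))
    (w : Fin n → ℝ) (hwpos : ∀ i, 0 < w i) (hw1 : ∀ i, w i ≤ 1)
    (hfix : ∀ i, w i =
      (A i ⬝ᵥ ((Aᵀ * Matrix.diagonal (fun t => w t ^ (1 - 2 / p)) * A)⁻¹).mulVec (A i))
        ^ (p / 2))
    (hconv : ∀ i, Tendsto (fun j => W j i) atTop (nhds (w i))) :
    ∀ i, w i ≤ C := by
  have hp0 : (0:ℝ) < p := lt_of_lt_of_le one_pos hp1
  have he : (1 - 2/p : ℝ) ≤ 0 := by
    have : (1:ℝ) ≤ 2/p := (one_le_div hp0).mpr (by linarith)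
    linarith
  set q : ℝ := 1 - p/2 with hq_def
  have hq0 : 0 ≤ q := by rw [hq_def]; linarith
  have hq1 : q < 1 := by rw [hq_def]; linarith
  have hAA : (Aᵀ * A).PosDef := by
    have h := posdef_ADA hA (dv := fun _ => (1:ℝ)) (fun _ => one_pos)
    simpa [Matrix.diagonal_one, Matrix.mul_one] using h
  have key : ∀ k : ℕ, ∀ i, w i ≤ C ^ (1 - q^k) := by
    intro k
    induction k with
    | zero =>
      intro i
      simpa [Real.rpow_zero] using hw1 i
    | succ k ih =>
      intro i
      set c : ℝ := C ^ (1 - q^k) with hc_def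
      have hc : 0 < c := Real.rpow_pos_of_pos hC _
      set dv : Fin n → ℝ := fun t => w t ^ (1 - 2/p) with hdv_def
      have hdv : ∀ t, 0 < dv t := fun t => Real.rpow_pos_of_pos (hwpos t) _
      have hM : (Aᵀ * Matrix.diagonal dv * A).PosDef := posdef_ADA hA hdv
      have hce : 0 < c ^ (1 - 2/p) := Real.rpow_pos_of_pos hc _
      have hN : ((c^(1-2/p)) • (Aᵀ * A)).PosDef := by
        refine Matrix.PosDef.of_dotProduct_mulVec_pos ?_ (fun x hx => ?_)
        · rw [Matrix.IsHermitian, Matrix.conjTranspose_smul, hAA.isHermitian.eq, star_trivial]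
        · rw [smul_mulVec, dotProduct_smul, smul_eq_mul]
          exact mul_pos hce (by simpa using hAA.dotProduct_mulVec_pos hx)
      have hcmp : ∀ y, y ⬝ᵥ ((c^(1-2/p)) • (Aᵀ*A)) *ᵥ y
          ≤ y ⬝ᵥ (Aᵀ * Matrix.diagonal dv * A) *ᵥ y := by
        intro y
        have h1 : y ⬝ᵥ ((c^(1-2/p)) • (Aᵀ*A)) *ᵥ y
            = ∑ t, c^(1-2/p) * (A *ᵥ y) t ^ 2 := by
          rw [smul_mulVec, dotProduct_smul, smul_eq_mul]
          have h2 : Aᵀ * A = Aᵀ * Matrix.diagonal (fun _ : Fin n => (1:ℝ)) * A := by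
            simp [Matrix.diagonal_one, Matrix.mul_one]
          rw [h2, quadform_ADA, Finset.mul_sum]
          simp
        rw [h1, quadform_ADA]
        apply Finset.sum_le_sum
        intro t _
        have hle : c^(1-2/p) ≤ dv t :=
          Real.rpow_le_rpow_of_nonpos (hwpos t) (ih t) he
        exact mul_le_mul_of_nonneg_right hle (sq_nonneg _)
      have hquad := inv_quad_le hM hN hcmp (A i)
      have hinv : ((c^(1-2/p)) • (Aᵀ*A))⁻¹ = (c^(1-2/p))⁻¹ • (Aᵀ*A)⁻¹ := by
        have : Invertible (c^(1-2/p)) := invertibleOfNonzero hce.ne'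
        rw [Matrix.inv_smul (A := Aᵀ*A) _ (isUnit_iff_isUnit_det _ |>.mp hAA.isUnit), invOf_eq_inv _]
      have hτ : A i ⬝ᵥ ((Aᵀ * Matrix.diagonal dv * A)⁻¹) *ᵥ (A i)
          ≤ (c^(1-2/p))⁻¹ * C := by
        refine le_trans hquad ?_
        rw [hinv, smul_mulVec, dotProduct_smul, smul_eq_mul]
        exact mul_le_mul_of_nonneg_left (hlev i) (by positivity)
      have hnn : 0 ≤ A i ⬝ᵥ ((Aᵀ * Matrix.diagonal dv * A)⁻¹) *ᵥ (A i) := by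
        have := hM.inv.posSemidef.dotProduct_mulVec_nonneg (A i)
        simpa using this
      have hstep : w i ≤ ((c^(1-2/p))⁻¹ * C) ^ (p/2) := by
        rw [hfix i]
        exact Real.rpow_le_rpow hnn hτ (by positivity)
      have hcalc : ((c^(1-2/p))⁻¹ * C) ^ (p/2) = C ^ (1 - q^(k+1)) := by
        have he2 : -(1 - 2/p) * (p/2) = q := by
          rw [hq_def]; field_simp; ring
        rw [← Real.rpow_neg hc.le, Real.mul_rpow (Real.rpow_nonneg hc.le _) hC.le,
          ← Real.rpow_mul hc.le, he2, hc_def, ← Real.rpow_mul hC.le, ← Real.rpow_add hC]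
        congr 1
        rw [pow_succ, hq_def]
        ring
      rw [hcalc] at hstep
      exact hstep
  intro i
  have hlim : Tendsto (fun k : ℕ => C ^ (1 - q^k)) atTop (nhds C) := by
    have h1 : Tendsto (fun k : ℕ => (1 : ℝ) - q^k) atTop (nhds 1) := by
      have h0 := tendsto_pow_atTop_nhds_zero_of_lt_one hq0 hq1
      simpa using (tendsto_const_nhds.sub h0)
    have h2 : ContinuousAt (fun y : ℝ => C ^ y) 1 :=
      Real.continuousAt_const_rpow hC.ne'
    have := h2.tendsto.comp h1
    simpa [Real.rpow_one, Function.comp_def] using this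
  exact ge_of_tendsto' hlim (fun k => key k i)
end

section
/- Let $p \in [1,2]$, $A = [a_1, \dots, a_n]^\top \in \mathbb{R}^{n \times d}$ have full column rank, $\gamma \in [0,1]$, and $j \in [n]$. Let $B \in \mathbb{R}^{(n+1) \times d}$ be obtained from $A$ by replacing row $a_j$ with $(1-\gamma)^{1/p} a_j$ and appending a new row $\gamma^{1/p} a_j$. Then the $\ell_p$ Lewis weights satisfy $w_i(B) = w_i(A)$ for $i \ne j, n+1$, $w_j(B) = (1-\gamma) w_j(A)$, and $w_{n+1}(B) = \gamma w_j(A)$. -/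
open Matrix

/-- The `ℓ_p` Lewis weights of `A`, as a predicate: positive weights satisfying the
fixed-point equation `wᵢ = (aᵢᵀ (Aᵀ W^{1-2/p} A)⁻¹ aᵢ)^{p/2}`. -/
def IsLewisWeights (p : ℝ) {n d : ℕ} (A : Matrix (Fin n) (Fin d) ℝ)
    (w : Fin n → ℝ) : Prop :=
  (∀ i, 0 < w i) ∧
  ∀ i, w i =
    (A i ⬝ᵥ ((Aᵀ * Matrix.diagonal (fun t => w t ^ (1 - 2 / p)) * A)⁻¹).mulVec (A i))
      ^ (p / 2)

variable {n d m : ℕ}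

lemma quadform (A : Matrix (Fin n) (Fin d) ℝ) (dg : Fin n → ℝ) (y : Fin d → ℝ) :
    y ⬝ᵥ (Aᵀ * Matrix.diagonal dg * A) *ᵥ y = ∑ i, dg i * (A i ⬝ᵥ y)^2 := by
  rw [← mulVec_mulVec, ← mulVec_mulVec, dotProduct_mulVec, vecMul_transpose]
  have hd : Matrix.diagonal dg *ᵥ (A *ᵥ y) = fun i => dg i * (A *ᵥ y) i := by
    ext i; simp [mulVec_diagonal]
  rw [hd]
  simp only [dotProduct, mulVec]
  exact Finset.sum_congr rfl fun i _ => by ring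

lemma herm (A : Matrix (Fin n) (Fin d) ℝ) (dg : Fin n → ℝ) :
    (Aᵀ * Matrix.diagonal dg * A).IsHermitian := by
  unfold Matrix.IsHermitian
  rw [conjTranspose_eq_transpose_of_trivial, transpose_mul, transpose_mul, transpose_transpose,
    diagonal_transpose, Matrix.mul_assoc]

lemma inj_of_rank (A : Matrix (Fin n) (Fin d) ℝ) (hA : A.rank = d) (y : Fin d → ℝ)
    (hy : A *ᵥ y = 0) : y = 0 := by
  have h := LinearMap.finrank_range_add_finrank_ker A.mulVecLin
  rw [show Module.finrank ℝ (Fin d → ℝ) = d by simp,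
    show Module.finrank ℝ (LinearMap.range A.mulVecLin) = d from hA] at h
  have hk : Module.finrank ℝ (LinearMap.ker A.mulVecLin) = 0 := by omega
  have hb : LinearMap.ker A.mulVecLin = ⊥ := Submodule.finrank_eq_zero.mp hk
  have hinj := LinearMap.ker_eq_bot.mp hb
  exact hinj (a₂ := 0) (by simpa using hy)

lemma posdefM (A : Matrix (Fin n) (Fin d) ℝ) (hA : ∀ y, A *ᵥ y = 0 → y = 0) (dg : Fin n → ℝ)
    (hdg : ∀ i, 0 < dg i) : (Aᵀ * Matrix.diagonal dg * A).PosDef := by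
  refine PosDef.of_dotProduct_mulVec_pos (herm A dg) fun x hx => ?_
  rw [star_trivial, quadform]
  have hAx : A *ᵥ x ≠ 0 := fun h => hx (hA x h)
  obtain ⟨i, hi⟩ : ∃ i, (A *ᵥ x) i ≠ 0 := by
    by_contra h; push_neg at h; exact hAx (funext h)
  refine Finset.sum_pos' (fun i _ => mul_nonneg (hdg i).le (sq_nonneg _))
    ⟨i, Finset.mem_univ i, mul_pos (hdg i) ?_⟩
  have hne : A i ⬝ᵥ x ≠ 0 := hi
  positivity

lemma inv_compare {M N : Matrix (Fin d) (Fin d) ℝ} (hM : M.PosDef) (hN : N.PosDef)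
    {s : ℝ} (hs : 0 < s) (hcomp : ∀ y, s * (y ⬝ᵥ N *ᵥ y) ≤ y ⬝ᵥ M *ᵥ y) (x : Fin d → ℝ) :
    x ⬝ᵥ M⁻¹ *ᵥ x ≤ s⁻¹ * (x ⬝ᵥ N⁻¹ *ᵥ x) := by
  have hMinv : M * M⁻¹ = 1 := mul_nonsing_inv M hM.det_pos.ne'.isUnit
  have hNinv : N * N⁻¹ = 1 := mul_nonsing_inv N hN.det_pos.ne'.isUnit
  have hNs : Nᵀ = N := by
    rw [← conjTranspose_eq_transpose_of_trivial]; exact hN.isHermitian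
  set u := M⁻¹ *ᵥ x with hu
  set z := s⁻¹ • (N⁻¹ *ᵥ x) with hz
  have hMu : M *ᵥ u = x := by rw [hu, mulVec_mulVec, hMinv, one_mulVec]
  have hNz : N *ᵥ z = s⁻¹ • x := by
    rw [hz, mulVec_smul, mulVec_mulVec, hNinv, one_mulVec]
  set a := x ⬝ᵥ u with ha
  set b := x ⬝ᵥ N⁻¹ *ᵥ x with hb
  have hzu : z ⬝ᵥ N *ᵥ u = s⁻¹ * a := by
    rw [dotProduct_mulVec, ← hNs, vecMul_transpose, hNz, smul_dotProduct, smul_eq_mul]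
  have huz : u ⬝ᵥ N *ᵥ z = s⁻¹ * a := by
    rw [hNz, dotProduct_smul, smul_eq_mul, dotProduct_comm]
  have hzz : z ⬝ᵥ N *ᵥ z = s⁻¹ * (s⁻¹ * b) := by
    rw [hNz, dotProduct_smul, smul_eq_mul, hz, smul_dotProduct, smul_eq_mul,
      dotProduct_comm]
  have key : 0 ≤ (u - z) ⬝ᵥ N *ᵥ (u - z) := by
    have := hN.posSemidef.dotProduct_mulVec_nonneg (u - z); rwa [star_trivial] at this
  have expand : (u - z) ⬝ᵥ N *ᵥ (u - z)
      = u ⬝ᵥ N *ᵥ u - 2 * (s⁻¹ * a) + s⁻¹ * (s⁻¹ * b) := by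
    rw [Matrix.mulVec_sub, sub_dotProduct, dotProduct_sub, dotProduct_sub, hzu, huz, hzz]
    ring
  have h2 : s * (u ⬝ᵥ N *ᵥ u) ≤ a := by
    have h := hcomp u
    rw [hMu] at h
    rw [ha, dotProduct_comm x u]
    exact h
  rw [expand] at key
  have hss : s * s⁻¹ = 1 := mul_inv_cancel₀ hs.ne'
  have key2 : 0 ≤ s * (u ⬝ᵥ N *ᵥ u) - 2 * a + s⁻¹ * b := by
    have h3 := mul_le_mul_of_nonneg_left key hs.le
    have h4 : s * (u ⬝ᵥ N *ᵥ u - 2 * (s⁻¹ * a) + s⁻¹ * (s⁻¹ * b))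
        = s * (u ⬝ᵥ N *ᵥ u) - 2 * a + s⁻¹ * b := by
      field_simp
    rw [h4, mul_zero] at h3
    exact h3
  linarith

lemma lewis_le (p : ℝ) (hp1 : 1 ≤ p) (hp2 : p ≤ 2)
    (A : Matrix (Fin m) (Fin d) ℝ) (hA : ∀ y, A *ᵥ y = 0 → y = 0)
    (w v : Fin m → ℝ) (hw : IsLewisWeights p A w) (hv : IsLewisWeights p A v) :
    ∀ i, v i ≤ w i := by
  have hp0 : (0:ℝ) < p := lt_of_lt_of_le one_pos hp1
  intro i1
  have hne : (Finset.univ : Finset (Fin m)).Nonempty := ⟨i1, Finset.mem_univ i1⟩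
  obtain ⟨i0, -, hmax⟩ := Finset.exists_max_image Finset.univ (fun i => v i / w i) hne
  set c := v i0 / w i0 with hc
  have hcpos : 0 < c := div_pos (hv.1 i0) (hw.1 i0)
  have hle : ∀ i, v i ≤ c * w i := fun i => by
    have := (div_le_iff₀ (hw.1 i)).mp (hmax i (Finset.mem_univ i))
    linarith [this, mul_comm (w i) c]
  set e := 1 - 2 / p with he
  have hep : e ≤ 0 := by
    have : (1:ℝ) ≤ 2 / p := (le_div_iff₀ hp0).mpr (by linarith)
    simp [he]; linarith
  set Mw := Aᵀ * Matrix.diagonal (fun t => w t ^ e) * A with hMw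
  set Mv := Aᵀ * Matrix.diagonal (fun t => v t ^ e) * A with hMv
  have hwpos : ∀ i, (0:ℝ) < w i ^ e := fun i => Real.rpow_pos_of_pos (hw.1 i) e
  have hvpos : ∀ i, (0:ℝ) < v i ^ e := fun i => Real.rpow_pos_of_pos (hv.1 i) e
  have hMwpd := posdefM A hA _ hwpos
  have hMvpd := posdefM A hA _ hvpos
  have hdiag : ∀ i, c ^ e * w i ^ e ≤ v i ^ e := by
    intro i
    have h1 : (c * w i) ^ e ≤ v i ^ e :=
      Real.rpow_le_rpow_of_nonpos (hv.1 i) (hle i) hep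
    rwa [Real.mul_rpow hcpos.le (hw.1 i).le] at h1
  have hcomp : ∀ y, c ^ e * (y ⬝ᵥ Mw *ᵥ y) ≤ y ⬝ᵥ Mv *ᵥ y := by
    intro y
    rw [hMw, hMv, quadform, quadform, Finset.mul_sum]
    refine Finset.sum_le_sum fun i _ => ?_
    rw [← mul_assoc]
    exact mul_le_mul_of_nonneg_right (hdiag i) (sq_nonneg _)
  have hce : (0:ℝ) < c ^ e := Real.rpow_pos_of_pos hcpos e
  have hkey := inv_compare hMvpd hMwpd hce hcomp (A i0)
  -- v i0 = (A i0 ⬝ Mv⁻¹ A i0)^{p/2} ≤ ((c^e)⁻¹ * (A i0 ⬝ Mw⁻¹ A i0))^{p/2} = c^{-e p/2} w i0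
  have hxv : (0:ℝ) ≤ A i0 ⬝ᵥ Mv⁻¹ *ᵥ A i0 := by
    have := hMvpd.inv.posSemidef.dotProduct_mulVec_nonneg (A i0); rwa [star_trivial] at this
  have hxw : (0:ℝ) ≤ A i0 ⬝ᵥ Mw⁻¹ *ᵥ A i0 := by
    have := hMwpd.inv.posSemidef.dotProduct_mulVec_nonneg (A i0); rwa [star_trivial] at this
  have hv0 : v i0 ≤ c ^ (1 - p/2) * w i0 := by
    have h1 : v i0 = (A i0 ⬝ᵥ Mv⁻¹ *ᵥ A i0) ^ (p/2) := hv.2 i0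
    have h2 : w i0 = (A i0 ⬝ᵥ Mw⁻¹ *ᵥ A i0) ^ (p/2) := hw.2 i0
    have h3 : (A i0 ⬝ᵥ Mv⁻¹ *ᵥ A i0) ^ (p/2)
        ≤ ((c ^ e)⁻¹ * (A i0 ⬝ᵥ Mw⁻¹ *ᵥ A i0)) ^ (p/2) :=
      Real.rpow_le_rpow hxv hkey (by positivity)
    have h4 : ((c ^ e)⁻¹ * (A i0 ⬝ᵥ Mw⁻¹ *ᵥ A i0)) ^ (p/2)
        = c ^ (1 - p/2) * w i0 := by
      rw [Real.mul_rpow (by positivity) hxw, h2, ← Real.rpow_neg hcpos.le,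
        ← Real.rpow_mul hcpos.le]
      congr 1
      rw [he]
      field_simp
      ring_nf
    rw [h1]
    rw [h4] at h3
    exact h3
  have hc1 : c ≤ 1 := by
    by_contra hc1
    push_neg at hc1
    have hlt : c ^ (1 - p/2) < c := by
      nth_rewrite 2 [← Real.rpow_one c]
      exact Real.rpow_lt_rpow_of_exponent_lt hc1 (by linarith)
    have hcw : c * w i0 = v i0 := by
      rw [hc, div_mul_cancel₀ _ (hw.1 i0).ne']
    nlinarith [hw.1 i0, hv0, hcw, hlt]
  calc v i1 ≤ c * w i1 := hle i1
    _ ≤ 1 * w i1 := mul_le_mul_of_nonneg_right hc1 (hw.1 i1).le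
    _ = w i1 := one_mul _

lemma lewis_unique (p : ℝ) (hp1 : 1 ≤ p) (hp2 : p ≤ 2)
    (A : Matrix (Fin m) (Fin d) ℝ) (hA : ∀ y, A *ᵥ y = 0 → y = 0)
    (w v : Fin m → ℝ) (hw : IsLewisWeights p A w) (hv : IsLewisWeights p A v) :
    w = v :=
  funext fun i => le_antisymm (lewis_le p hp1 hp2 A hA v w hv hw i)
    (lewis_le p hp1 hp2 A hA w v hw hv i)

lemma entryM (A : Matrix (Fin n) (Fin d) ℝ) (dg : Fin n → ℝ) (k l : Fin d) :
    (Aᵀ * Matrix.diagonal dg * A) k l = ∑ i, dg i * (A i k * A i l) := by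
  rw [Matrix.mul_apply]
  simp only [Matrix.mul_diagonal, transpose_apply]
  exact Finset.sum_congr rfl fun i _ => by ring

lemma scalar_combine (p t W x y : ℝ) (hp : 0 < p) (ht : 0 < t) (hW : 0 < W) :
    (t * W) ^ (1 - 2/p) * ((t ^ ((1:ℝ)/p) * x) * (t ^ ((1:ℝ)/p) * y))
      = t * (W ^ (1 - 2/p) * (x * y)) := by
  have h : t ^ (1 - 2/p) * (t ^ ((1:ℝ)/p) * t ^ ((1:ℝ)/p)) = t := by
    rw [← Real.rpow_add ht, ← Real.rpow_add ht,
      show 1 - 2/p + ((1:ℝ)/p + (1:ℝ)/p) = 1 by ring, Real.rpow_one]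
  rw [Real.mul_rpow ht.le hW.le]
  linear_combination (W ^ (1 - 2/p) * (x * y)) * h

lemma pow_combine (p t x : ℝ) (hp : 0 < p) (ht : 0 < t) (hx : 0 ≤ x) :
    (t ^ ((1:ℝ)/p) * (t ^ ((1:ℝ)/p) * x)) ^ (p/2) = t * x ^ (p/2) := by
  rw [← mul_assoc, ← Real.rpow_add ht, Real.mul_rpow (by positivity) hx,
    ← Real.rpow_mul ht.le, show ((1:ℝ)/p + 1/p) * (p/2) = 1 by field_simp; norm_num, Real.rpow_one]

/-- Splitting lemma: splitting row `aⱼ` of `A` into `(1-γ)^{1/p} aⱼ` and `γ^{1/p} aⱼ`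
splits its Lewis weight into `(1-γ) wⱼ(A)` and `γ wⱼ(A)`, leaving all other weights
unchanged. -/
theorem stmt_6 {n d : ℕ} (p : ℝ) (hp1 : 1 ≤ p) (hp2 : p ≤ 2)
    (A : Matrix (Fin n) (Fin d) ℝ) (hA : A.rank = d)
    (γ : ℝ) (hγ0 : 0 ≤ γ) (hγ1 : γ ≤ 1) (j : Fin n)
    (B : Matrix (Fin (n + 1)) (Fin d) ℝ)
    (hBrow : ∀ i : Fin n, i ≠ j → B i.castSucc = A i)
    (hBj : B j.castSucc = ((1 - γ) ^ ((1 : ℝ) / p)) • A j)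
    (hBlast : B (Fin.last n) = (γ ^ ((1 : ℝ) / p)) • A j)
    (wA : Fin n → ℝ) (hwA : IsLewisWeights p A wA)
    (wB : Fin (n + 1) → ℝ) (hwB : IsLewisWeights p B wB) :
    (∀ i : Fin n, i ≠ j → wB i.castSucc = wA i) ∧
    wB j.castSucc = (1 - γ) * wA j ∧
    wB (Fin.last n) = γ * wA j := by
  have hp0 : (0:ℝ) < p := lt_of_lt_of_le one_pos hp1
  have hp2' : (0:ℝ) < p / 2 := by linarith
  -- edge cases
  have hzero : ∀ k : Fin (n+1), B k = 0 → False := by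
    intro k hk
    have := hwB.2 k
    rw [hk] at this
    rw [zero_dotProduct, Real.zero_rpow hp2'.ne'] at this
    exact (hwB.1 k).ne' (this.symm ▸ this ▸ rfl) |>.elim
  rcases eq_or_lt_of_le hγ0 with hγ0' | hγ0'
  · exfalso
    apply hzero (Fin.last n)
    rw [hBlast, ← hγ0', Real.zero_rpow (by positivity), zero_smul]
  rcases eq_or_lt_of_le hγ1 with hγ1' | hγ1'
  · exfalso
    apply hzero j.castSucc
    rw [hBj, hγ1', sub_self, Real.zero_rpow (by positivity), zero_smul]
  have h1γ : 0 < 1 - γ := by linarith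
  -- injectivity
  have hAinj : ∀ y, A *ᵥ y = 0 → y = 0 := inj_of_rank A hA
  have hBinj : ∀ y, B *ᵥ y = 0 → y = 0 := by
    intro y hy
    apply hAinj
    funext i
    by_cases hij : i = j
    · subst hij
      have h := congrFun hy i.castSucc
      rw [show (B *ᵥ y) i.castSucc = B i.castSucc ⬝ᵥ y from rfl, hBj,
        smul_dotProduct, smul_eq_mul] at h
      have hc : ((1 - γ) ^ ((1:ℝ)/p)) ≠ 0 := (Real.rpow_pos_of_pos h1γ _).ne'
      have h2 : A i ⬝ᵥ y = 0 := by
        rcases mul_eq_zero.mp h with h' | h'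
        · exact absurd h' hc
        · exact h'
      exact h2
    · have h := congrFun hy i.castSucc
      rw [show (B *ᵥ y) i.castSucc = B i.castSucc ⬝ᵥ y from rfl, hBrow i hij] at h
      exact h
  -- candidate weights
  set w' : Fin (n+1) → ℝ :=
    Fin.snoc (Function.update wA j ((1 - γ) * wA j)) (γ * wA j) with hw'def
  have hw'cast : ∀ i : Fin n, i ≠ j → w' i.castSucc = wA i := by
    intro i hij
    rw [hw'def, Fin.snoc_castSucc, Function.update_of_ne hij]
  have hw'j : w' j.castSucc = (1 - γ) * wA j := by
    rw [hw'def, Fin.snoc_castSucc, Function.update_self]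
  have hw'last : w' (Fin.last n) = γ * wA j := by
    rw [hw'def, Fin.snoc_last]
  -- matrix equality
  have hMeq : Bᵀ * Matrix.diagonal (fun t => w' t ^ (1 - 2/p)) * B
      = Aᵀ * Matrix.diagonal (fun t => wA t ^ (1 - 2/p)) * A := by
    ext k l
    rw [entryM, entryM, Fin.sum_univ_castSucc]
    rw [← Finset.add_sum_erase _ (fun i : Fin n =>
        w' i.castSucc ^ (1 - 2/p) * (B i.castSucc k * B i.castSucc l)) (Finset.mem_univ j),
      ← Finset.add_sum_erase _ (fun i : Fin n =>
        wA i ^ (1 - 2/p) * (A i k * A i l)) (Finset.mem_univ j)]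
    have hrest : ∑ i ∈ Finset.univ.erase j,
          w' i.castSucc ^ (1 - 2/p) * (B i.castSucc k * B i.castSucc l)
        = ∑ i ∈ Finset.univ.erase j, wA i ^ (1 - 2/p) * (A i k * A i l) := by
      refine Finset.sum_congr rfl fun i hi => ?_
      have hij : i ≠ j := Finset.ne_of_mem_erase hi
      rw [hw'cast i hij, hBrow i hij]
    have hjterm : w' j.castSucc ^ (1 - 2/p) * (B j.castSucc k * B j.castSucc l)
          + w' (Fin.last n) ^ (1 - 2/p) * (B (Fin.last n) k * B (Fin.last n) l)
        = wA j ^ (1 - 2/p) * (A j k * A j l) := by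
      have hBjk : B j.castSucc k = (1 - γ) ^ ((1:ℝ)/p) * A j k := by rw [hBj]; rfl
      have hBjl : B j.castSucc l = (1 - γ) ^ ((1:ℝ)/p) * A j l := by rw [hBj]; rfl
      have hBlk : B (Fin.last n) k = γ ^ ((1:ℝ)/p) * A j k := by rw [hBlast]; rfl
      have hBll : B (Fin.last n) l = γ ^ ((1:ℝ)/p) * A j l := by rw [hBlast]; rfl
      rw [hw'j, hw'last, hBjk, hBjl, hBlk, hBll,
        scalar_combine p (1-γ) (wA j) (A j k) (A j l) hp0 h1γ (hwA.1 j),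
        scalar_combine p γ (wA j) (A j k) (A j l) hp0 hγ0' (hwA.1 j)]
      ring
    rw [hrest]
    linarith [hjterm]
  -- Lewis property of w'
  set M := Aᵀ * Matrix.diagonal (fun t => wA t ^ (1 - 2/p)) * A with hM
  have hMpd : M.PosDef := posdefM A hAinj _
    (fun i => Real.rpow_pos_of_pos (hwA.1 i) _)
  have hxnn : ∀ x : Fin d → ℝ, 0 ≤ x ⬝ᵥ M⁻¹ *ᵥ x := by
    intro x
    have := hMpd.inv.posSemidef.dotProduct_mulVec_nonneg x
    rwa [star_trivial] at this
  have hw'pos : ∀ i, 0 < w' i := by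
    intro i
    induction i using Fin.lastCases with
    | last => rw [hw'last]; exact mul_pos hγ0' (hwA.1 j)
    | cast i =>
      by_cases hij : i = j
      · subst hij; rw [hw'j]; exact mul_pos h1γ (hwA.1 i)
      · rw [hw'cast i hij]; exact hwA.1 i
  have hw'lewis : IsLewisWeights p B w' := by
    refine ⟨hw'pos, fun i => ?_⟩
    rw [hMeq]
    induction i using Fin.lastCases with
    | last =>
      rw [hw'last, hBlast, smul_dotProduct, mulVec_smul, dotProduct_smul,
        smul_eq_mul, smul_eq_mul, pow_combine p γ _ hp0 hγ0' (hxnn (A j)), ← hwA.2 j]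
    | cast i =>
      by_cases hij : i = j
      · subst hij
        rw [hw'j, hBj, smul_dotProduct, mulVec_smul, dotProduct_smul,
          smul_eq_mul, smul_eq_mul, pow_combine p (1-γ) _ hp0 h1γ (hxnn (A i)), ← hwA.2 i]
      · rw [hw'cast i hij, hBrow i hij]
        exact hwA.2 i
  -- uniqueness
  have hEq : wB = w' := lewis_unique p hp1 hp2 B hBinj wB w' hwB hw'lewis
  refine ⟨fun i hij => ?_, ?_, ?_⟩
  · rw [hEq, hw'cast i hij]
  · rw [hEq, hw'j]
  · rw [hEq, hw'last]
end

section
/- Let $A \in \mathbb{R}^{n \times d}$, let $A^{(i)}$ denote the matrix of the first $i$ rows, and suppose each $A^{(i)}$ (for $i \ge 1$) has full column rank. Let $\sigma_{\min}$ and singular value decompositions be as usual, and let $\tau$ be the leverage score of row $a_{i+1}$ in $A^{(i+1)}$. Let $\sigma^* = \min_{i} \sigma_{\min}(A^{(i)})$. Then $\frac{1}{8}\min\{a_{i+1}^\top (A^{(i)\top} A^{(i)} + \lambda I_d)^{-1} a_{i+1}, 1\} \le a_{i+1}^\top (A^{(i+1)\top} A^{(i+1)} + (\sigma^*)^2 I_d)^{-1}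 a_{i+1}$ for every $0 < \lambda < (\sigma^*)^2$. -/
open Matrix

/-- The smallest singular value of a matrix with full column rank: the minimum of `‖Mx‖₂`
over unit vectors `x`. -/
noncomputable def sigmaMin {m d : ℕ} (M : Matrix (Fin m) (Fin d) ℝ) : ℝ :=
  sInf {s : ℝ | ∃ x : Fin d → ℝ, (∑ k, (x k) ^ 2) = 1 ∧
    s = Real.sqrt (∑ k, (M.mulVec x k) ^ 2)}

lemma aux_arith (s t X c : ℝ) (hs0 : 0 ≤ s) (hcpos : 0 < c)
    (hc1 : c * (2 * (1 + s)) = 1)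
    (hmain : 2 * (c * s) - X ≤ t) (hkx : X ≤ 2 * (c ^ 2 * s + (c * s) ^ 2)) :
    (1 / 8) * min s 1 ≤ t := by
  have hlow : c * s ≤ t := by nlinarith
  rcases le_total s 1 with hcase | hcase
  · rw [min_eq_left hcase]
    nlinarith [mul_nonneg hcpos.le hs0, sq_nonneg (1 - s)]
  · rw [min_eq_right hcase]
    nlinarith [mul_nonneg hcpos.le (by linarith : (0:ℝ) ≤ s - 1)]


-- quadratic lower bound for inverse quadratic form
lemma aux_quad' {d : ℕ} {N : Matrix (Fin d) (Fin d) ℝ} (hN : N.PosDef) (a x : Fin d → ℝ) :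
    2 * (a ⬝ᵥ x) - x ⬝ᵥ N *ᵥ x ≤ a ⬝ᵥ N⁻¹ *ᵥ a := by
  have hdet : IsUnit N.det := isUnit_iff_ne_zero.mpr (ne_of_gt hN.det_pos)
  have hNNinv : ∀ v : Fin d → ℝ, N *ᵥ (N⁻¹ *ᵥ v) = v := fun v => by
    rw [mulVec_mulVec, Matrix.mul_nonsing_inv _ hdet, one_mulVec]
  have hsymm : Nᵀ = N := by
    have := hN.isHermitian.eq
    rwa [Matrix.conjTranspose_eq_transpose_of_trivial] at this
  have h0 : 0 ≤ (x - N⁻¹ *ᵥ a) ⬝ᵥ N *ᵥ (x - N⁻¹ *ᵥ a) := by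
    simpa using hN.posSemidef.dotProduct_mulVec_nonneg (x - N⁻¹ *ᵥ a)
  have hvm : ∀ u v : Fin d → ℝ, u ⬝ᵥ N *ᵥ v = (N *ᵥ u) ⬝ᵥ v := fun u v => by
    rw [dotProduct_mulVec]
    congr 1
    conv_lhs => rw [← hsymm, vecMul_transpose]
  have hexp : (x - N⁻¹ *ᵥ a) ⬝ᵥ N *ᵥ (x - N⁻¹ *ᵥ a)
      = x ⬝ᵥ N *ᵥ x - a ⬝ᵥ x - a ⬝ᵥ x + a ⬝ᵥ N⁻¹ *ᵥ a := by
    rw [mulVec_sub, hNNinv, sub_dotProduct, dotProduct_sub, dotProduct_sub]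
    have h1 : x ⬝ᵥ a = a ⬝ᵥ x := dotProduct_comm _ _
    have h2 : (N⁻¹ *ᵥ a) ⬝ᵥ N *ᵥ x = a ⬝ᵥ x := by rw [hvm, hNNinv]
    have h3 : (N⁻¹ *ᵥ a) ⬝ᵥ a = a ⬝ᵥ N⁻¹ *ᵥ a := dotProduct_comm _ _
    rw [h1, h2, h3]; ring
  rw [hexp] at h0; linarith


lemma aux_sigma' {m d : ℕ} (C : Matrix (Fin m) (Fin d) ℝ) (σ : ℝ) (hσ0 : 0 ≤ σ)
    (hσle : σ ≤ sigmaMin C) (x : Fin d → ℝ) :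
    σ ^ 2 * (∑ k, x k ^ 2) ≤ ∑ k, (C.mulVec x k) ^ 2 := by
  unfold sigmaMin at hσle
  have hq : 0 ≤ ∑ k, x k ^ 2 := Finset.sum_nonneg fun k _ => sq_nonneg _
  have hQx : 0 ≤ ∑ k, (C.mulVec x k) ^ 2 := Finset.sum_nonneg fun k _ => sq_nonneg _
  rcases eq_or_lt_of_le hq with hq0 | hqpos
  · rw [← hq0, mul_zero]; exact hQx
  set r := Real.sqrt (∑ k, x k ^ 2) with hr
  have hrpos : 0 < r := Real.sqrt_pos.mpr hqpos
  have hr2 : r ^ 2 = ∑ k, x k ^ 2 := Real.sq_sqrt hq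
  set u := r⁻¹ • x with hu
  have hu1 : (∑ k, (u k) ^ 2) = 1 := by
    have : ∑ k, (u k) ^ 2 = r⁻¹ ^ 2 * ∑ k, x k ^ 2 := by
      rw [Finset.mul_sum]
      exact Finset.sum_congr rfl fun k _ => by simp [hu, mul_pow]
    rw [this, ← hr2]
    field_simp
  have hCu : ∀ k, C.mulVec u k = r⁻¹ * C.mulVec x k := fun k => by
    rw [hu, mulVec_smul]; simp
  have hQu : ∑ k, (C.mulVec u k) ^ 2 = r⁻¹ ^ 2 * ∑ k, (C.mulVec x k) ^ 2 := by
    rw [Finset.mul_sum]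
    exact Finset.sum_congr rfl fun k _ => by rw [hCu k, mul_pow]
  have hbdd : BddBelow {s : ℝ | ∃ x : Fin d → ℝ, (∑ k, (x k) ^ 2) = 1 ∧
      s = Real.sqrt (∑ k, (C.mulVec x k) ^ 2)} := by
    refine ⟨0, ?_⟩
    rintro s ⟨y, -, rfl⟩
    exact Real.sqrt_nonneg _
  have hmem : Real.sqrt (∑ k, (C.mulVec u k) ^ 2) ∈ {s : ℝ | ∃ x : Fin d → ℝ,
      (∑ k, (x k) ^ 2) = 1 ∧ s = Real.sqrt (∑ k, (C.mulVec x k) ^ 2)} := ⟨u, hu1, rfl⟩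
  have hle : σ ≤ Real.sqrt (∑ k, (C.mulVec u k) ^ 2) := hσle.trans (csInf_le hbdd hmem)
  have hsq : σ ^ 2 ≤ ∑ k, (C.mulVec u k) ^ 2 := by
    have := pow_le_pow_left₀ hσ0 hle 2
    rwa [Real.sq_sqrt (Finset.sum_nonneg fun k _ => sq_nonneg _)] at this
  rw [hQu] at hsq
  have hrne : r ≠ 0 := ne_of_gt hrpos
  have : σ ^ 2 * r ^ 2 ≤ (r⁻¹ ^ 2 * ∑ k, (C.mulVec x k) ^ 2) * r ^ 2 :=
    mul_le_mul_of_nonneg_right hsq (sq_nonneg r)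
  calc σ ^ 2 * (∑ k, x k ^ 2) = σ ^ 2 * r ^ 2 := by rw [hr2]
    _ ≤ (r⁻¹ ^ 2 * ∑ k, (C.mulVec x k) ^ 2) * r ^ 2 := this
    _ = ∑ k, (C.mulVec x k) ^ 2 := by field_simp


/-- For `0 < λ < (σ*)²`, the online ridge leverage score with regularization `λ` is at most
`8` times the ridge leverage score of the same row in `A^{(i+1)}` with regularization `(σ*)²`. -/
theorem stmt_8 {n d : ℕ} (A : Matrix (Fin n) (Fin d) ℝ)
    (hrank : ∀ (i : ℕ) (h1 : 1 ≤ i) (h2 : i ≤ n), (A.submatrix (Fin.castLE h2) id).rank = d)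
    (σstar : ℝ)
    (hσ : IsLeast {s : ℝ | ∃ (i : ℕ) (h1 : 1 ≤ i) (h2 : i ≤ n),
      s = sigmaMin (A.submatrix (Fin.castLE h2) id)} σstar)
    (lam : ℝ) (hlam0 : 0 < lam) (hlam : lam < σstar ^ 2)
    (i : ℕ) (hi : i + 1 ≤ n) :
    (1 / 8) * min (A ⟨i, hi⟩ ⬝ᵥ
        (((A.submatrix (Fin.castLE (Nat.le_of_succ_le hi)) id)ᵀ *
            A.submatrix (Fin.castLE (Nat.le_of_succ_le hi)) id +
          lam • (1 : Matrix (Fin d) (Fin d) ℝ))⁻¹).mulVec (A ⟨i, hi⟩)) 1 ≤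
      A ⟨i, hi⟩ ⬝ᵥ
        (((A.submatrix (Fin.castLE hi) id)ᵀ * A.submatrix (Fin.castLE hi) id +
          (σstar ^ 2) • (1 : Matrix (Fin d) (Fin d) ℝ))⁻¹).mulVec (A ⟨i, hi⟩) := by
  classical
  set a : Fin d → ℝ := A ⟨i, hi⟩ with ha
  set B := A.submatrix (Fin.castLE (Nat.le_of_succ_le hi)) id with hB
  set C := A.submatrix (Fin.castLE hi) id with hC
  set M := Bᵀ * B + lam • (1 : Matrix (Fin d) (Fin d) ℝ) with hM
  set N := Cᵀ * C + (σstar ^ 2) • (1 : Matrix (Fin d) (Fin d) ℝ) with hN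
  have hσ2 : (0:ℝ) < σstar ^ 2 := hlam0.trans hlam
  -- σstar is nonnegative
  have hσ0 : 0 ≤ σstar := by
    obtain ⟨j, hj1, hj2, hEq⟩ := hσ.1
    rw [hEq]
    apply Real.sInf_nonneg
    rintro s ⟨y, -, rfl⟩
    exact Real.sqrt_nonneg _
  -- positive definiteness
  have hPSD : ∀ (m : ℕ) (D : Matrix (Fin m) (Fin d) ℝ), (Dᵀ * D).PosSemidef := fun m D => by
    have := Matrix.posSemidef_conjTranspose_mul_self D
    rwa [Matrix.conjTranspose_eq_transpose_of_trivial] at this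
  have hdiag : ∀ t : ℝ, 0 < t → (t • (1 : Matrix (Fin d) (Fin d) ℝ)).PosDef := fun t ht => by
    rw [Matrix.smul_one_eq_diagonal]
    exact Matrix.PosDef.diagonal fun _ => ht
  have hMpd : M.PosDef := Matrix.PosDef.posSemidef_add (hPSD _ B) (hdiag _ hlam0)
  have hNpd : N.PosDef := Matrix.PosDef.posSemidef_add (hPSD _ C) (hdiag _ hσ2)
  set s := a ⬝ᵥ M⁻¹ *ᵥ a with hs
  have hs0 : 0 ≤ s := by simpa using hMpd.inv.posSemidef.dotProduct_mulVec_nonneg a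
  -- quadratic form identities
  have hquad : ∀ (m : ℕ) (D : Matrix (Fin m) (Fin d) ℝ) (x : Fin d → ℝ),
      x ⬝ᵥ (Dᵀ * D) *ᵥ x = ∑ k, (D *ᵥ x) k ^ 2 := fun m D x => by
    rw [← mulVec_mulVec, dotProduct_mulVec, vecMul_transpose]
    simp [dotProduct, pow_two]
  have hsmul : ∀ (t : ℝ) (x : Fin d → ℝ),
      x ⬝ᵥ (t • (1 : Matrix (Fin d) (Fin d) ℝ)) *ᵥ x = t * ∑ k, x k ^ 2 := fun t x => by
    rw [smul_mulVec, one_mulVec, dotProduct_smul]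
    simp [dotProduct, pow_two, Finset.mul_sum]
  have hsplit : ∀ x : Fin d → ℝ,
      ∑ k, (C *ᵥ x) k ^ 2 = (∑ k, (B *ᵥ x) k ^ 2) + (a ⬝ᵥ x) ^ 2 := fun x => by
    rw [Fin.sum_univ_castSucc]
    congr 1
  have hClow : ∀ x : Fin d → ℝ, σstar ^ 2 * ∑ k, x k ^ 2 ≤ ∑ k, (C *ᵥ x) k ^ 2 := fun x =>
    aux_sigma' C σstar hσ0 (hσ.2 ⟨i + 1, Nat.succ_le_succ (Nat.zero_le i), hi, rfl⟩) x
  have hkey : ∀ x : Fin d → ℝ, x ⬝ᵥ N *ᵥ x ≤ 2 * (x ⬝ᵥ M *ᵥ x + (a ⬝ᵥ x) ^ 2) := fun x => by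
    have e1 : x ⬝ᵥ N *ᵥ x = ∑ k, (C *ᵥ x) k ^ 2 + σstar ^ 2 * ∑ k, x k ^ 2 := by
      rw [hN, add_mulVec, dotProduct_add, hquad, hsmul]
    have e2 : x ⬝ᵥ M *ᵥ x = ∑ k, (B *ᵥ x) k ^ 2 + lam * ∑ k, x k ^ 2 := by
      rw [hM, add_mulVec, dotProduct_add, hquad, hsmul]
    have h3 := hClow x
    have h4 := hsplit x
    have h5 : 0 ≤ ∑ k, x k ^ 2 := Finset.sum_nonneg fun k _ => sq_nonneg _
    have h6 : 0 ≤ lam * ∑ k, x k ^ 2 := mul_nonneg hlam0.le h5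
    linarith
  -- choose the test vector
  have h1s : (0:ℝ) < 1 + s := by linarith
  set c : ℝ := 1 / (2 * (1 + s)) with hcdef
  have hcpos : 0 < c := by positivity
  have hc1 : c * (2 * (1 + s)) = 1 := by
    rw [hcdef]; field_simp
  set x0 := c • (M⁻¹ *ᵥ a) with hx0
  have hdet : IsUnit M.det := isUnit_iff_ne_zero.mpr (ne_of_gt hMpd.det_pos)
  have hMinva : M *ᵥ (M⁻¹ *ᵥ a) = a := by
    rw [mulVec_mulVec, Matrix.mul_nonsing_inv _ hdet, one_mulVec]
  have hax0 : a ⬝ᵥ x0 = c * s := by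
    rw [hx0, dotProduct_smul, smul_eq_mul]
  have hMx0 : x0 ⬝ᵥ M *ᵥ x0 = c ^ 2 * s := by
    rw [hx0, mulVec_smul, hMinva, smul_dotProduct, dotProduct_smul, smul_eq_mul, smul_eq_mul,
      dotProduct_comm]
    ring
  have hmain := aux_quad' hNpd a x0
  have hkx := hkey x0
  rw [hax0] at hmain hkx
  rw [hMx0] at hkx
  -- a ⬝ᵥ N⁻¹ *ᵥ a ≥ 2*c*s - 2*(c^2*s + (c*s)^2) = c*s
  exact aux_arith s (a ⬝ᵥ N⁻¹ *ᵥ a) (x0 ⬝ᵥ N *ᵥ x0) c hs0 hcpos hc1 hmain hkx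
end
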